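/- Let α > 1, λ ≥ 1 and τ ∈ (0,1). Let G = {(x,y) : -1 < x < 1, |x|^α < y < 1} and T = {(x,y) : x > 0, λx < y < τ}. Then the Hilbert (Busemann) area μ_G(T) of T with respect to the Hilbert geometry of G is finite. -/

import Mathlib

open MeasureTheory
open scoped ENNReal Classical

/-- Hilbert Finsler norm `F_C(p,v) = (1/2)‖v‖(1/‖p-p⁻‖+1/‖p-p⁺‖) = (1/2)(1/t⁺+1/t⁻)`
where `t⁺, t⁻` are the exit times of the line through `p` with direction `±v`. -/
noncomputable def hilbertFinsler {E : Type*} [NormedAddCommGroup E] [NormedSpace ℝ E]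
    (C : Set E) (p v : E) : ℝ :=
  if v = 0 then 0 else
    (1 / 2) * (1 / sSup {t : ℝ | 0 < t ∧ p + t • v ∈ C}
      + 1 / sSup {t : ℝ | 0 < t ∧ p - t • v ∈ C})

/-- Unit ball of the Hilbert Finsler norm at `p`. -/
noncomputable def hilbertUnitBall {E : Type*} [NormedAddCommGroup E] [NormedSpace ℝ E]
    (C : Set E) (p : E) : Set E :=
  {v | hilbertFinsler C p v < 1}

/-- Hilbert (Busemann) measure of a planar convex domain: density `ω₂ / Vol(B_C(p))`
with `ω₂ = π`. -/
noncomputable def hilbertMeasure (C : Set (ℝ × ℝ)) (A : Set (ℝ × ℝ)) : ℝ≥0∞ :=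
  ∫⁻ p in A, ENNReal.ofReal Real.pi / volume (hilbertUnitBall C p)

/-- If `p ± 2v ∈ C` then `v` lies in the Hilbert unit ball at `p`. -/
lemma mem_hilbertUnitBall_of_pm {E : Type*} [NormedAddCommGroup E] [NormedSpace ℝ E]
    {C : Set E} {p v : E} (h1 : p + (2:ℝ) • v ∈ C) (h2 : p - (2:ℝ) • v ∈ C) :
    v ∈ hilbertUnitBall C p := by
  have key : ∀ S : Set ℝ, (2:ℝ) ∈ S → 1 / sSup S ≤ 1 / 2 := by
    intro S hS
    by_cases hB : BddAbove S
    · have h2le : (2:ℝ) ≤ sSup S := le_csSup hB hS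
      have h0 : (0:ℝ) < sSup S := by linarith
      rw [div_le_div_iff₀ h0 (by norm_num)]
      linarith
    · rw [Real.sSup_of_not_bddAbove hB]
      norm_num
  by_cases hv : v = 0
  · simp [hilbertUnitBall, hilbertFinsler, hv]
  · have hA := key {t : ℝ | 0 < t ∧ p + t • v ∈ C} ⟨by norm_num, h1⟩
    have hB := key {t : ℝ | 0 < t ∧ p - t • v ∈ C} ⟨by norm_num, h2⟩
    simp only [hilbertUnitBall, hilbertFinsler, Set.mem_setOf_eq, if_neg hv]
    linarith

set_option maxHeartbeats 2000000 in
theorem stmt_11 (α lam τ : ℝ) (hα : 1 < α) (hlam : 1 ≤ lam) (hτ : τ ∈ Set.Ioo (0 : ℝ) 1) :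
    hilbertMeasure {p : ℝ × ℝ | -1 < p.1 ∧ p.1 < 1 ∧ |p.1| ^ α < p.2 ∧ p.2 < 1}
      {p : ℝ × ℝ | 0 < p.1 ∧ lam * p.1 < p.2 ∧ p.2 < τ} < ⊤ := by
  obtain ⟨hτ0, hτ1⟩ := hτ
  set C : Set (ℝ × ℝ) := {p : ℝ × ℝ | -1 < p.1 ∧ p.1 < 1 ∧ |p.1| ^ α < p.2 ∧ p.2 < 1} with hC
  set T : Set (ℝ × ℝ) := {p : ℝ × ℝ | 0 < p.1 ∧ lam * p.1 < p.2 ∧ p.2 < τ} with hT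
  have hα0 : (0:ℝ) < α := by linarith
  have hαinv : (0:ℝ) < α⁻¹ := by positivity
  have hαinv1 : α⁻¹ < 1 := by
    rw [inv_lt_one_iff₀]; right; exact hα
  -- constants
  set β := τ ^ (α - 1) with hβdef
  have hβ0 : 0 < β := Real.rpow_pos_of_pos hτ0 _
  have hβ1 : β < 1 := Real.rpow_lt_one hτ0.le hτ1 (by linarith)
  set c₁ := ((1 + β) / 2) ^ α⁻¹ - β ^ α⁻¹ with hc₁def
  have hc₁0 : 0 < c₁ := by
    have hlt : β < (1 + β) / 2 := by linarith
    have := Real.rpow_lt_rpow hβ0.le hlt hαinv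
    simp only [hc₁def]; linarith
  set c₄ := min ((1 - β) / 2) ((1 - τ) / (2 * τ)) with hc₄def
  have hc₄0 : 0 < c₄ := lt_min (by linarith) (div_pos (by linarith) (by linarith))
  set a := (1 + α⁻¹) / 2 with hadef
  have ha0 : 0 < a := by positivity
  have ha1 : a < 1 := by rw [hadef]; linarith
  set K := Real.pi / (c₁ * c₄) with hKdef
  have hK0 : 0 < K := by positivity
  -- the comparison function
  set g : ℝ × ℝ → ℝ≥0∞ := fun p =>
    ENNReal.ofReal K * (ENNReal.ofReal (p.1 ^ (-a)) * ENNReal.ofReal (p.2 ^ (-a))) with hg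
  -- pointwise bound on T
  have key : ∀ p ∈ T, ENNReal.ofReal Real.pi / volume (hilbertUnitBall C p) ≤ g p := by
    rintro ⟨x, y⟩ hp
    rw [hT] at hp
    replace hp : 0 < x ∧ lam * x < y ∧ y < τ := hp
    obtain ⟨hpx, hpl, hpτ⟩ := hp
    have hy0 : 0 < y := lt_trans (by positivity) hpl
    have hxy : x < y := lt_of_le_of_lt (le_mul_of_one_le_left hpx.le hlam) hpl
    have hy1 : y < 1 := hpτ.trans hτ1
    set r := c₁ * y ^ α⁻¹ with hrdef
    set s := c₄ * y with hsdef
    have hyα : 0 < y ^ α⁻¹ := Real.rpow_pos_of_pos hy0 _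
    have hr0 : 0 < r := by positivity
    have hs0 : 0 < s := by positivity
    -- x^α ≤ β y
    have hxα : x ^ α ≤ β * y := by
      have h1 : x ^ α < y ^ α := Real.rpow_lt_rpow hpx.le hxy hα0
      have h2 : y ^ α = y ^ (α - 1) * y := by
        rw [← Real.rpow_add_one hy0.ne', sub_add_cancel]
      have h3 : y ^ (α - 1) ≤ β := Real.rpow_le_rpow hy0.le hpτ.le (by linarith)
      have h4 : y ^ (α - 1) * y ≤ β * y := mul_le_mul_of_nonneg_right h3 hy0.le
      linarith [h2 ▸ h1]
    have hxle : x ≤ (β * y) ^ α⁻¹ := by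
      have hx' : x = (x ^ α) ^ α⁻¹ := (Real.rpow_rpow_inv hpx.le hα0.ne').symm
      rw [hx']
      exact Real.rpow_le_rpow (Real.rpow_nonneg hpx.le _) hxα hαinv.le
    set M := ((1 + β) / 2 * y) ^ α⁻¹ with hMdef
    have hM : x + r ≤ M := by
      have e1 : M = ((1 + β) / 2) ^ α⁻¹ * y ^ α⁻¹ := Real.mul_rpow (by positivity) hy0.le
      have e2 : (β * y) ^ α⁻¹ = β ^ α⁻¹ * y ^ α⁻¹ := Real.mul_rpow hβ0.le hy0.le
      have hr' : r = (((1 + β) / 2) ^ α⁻¹ - β ^ α⁻¹) * y ^ α⁻¹ := by rw [hrdef, hc₁def]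
      rw [e1]
      rw [e2] at hxle
      nlinarith [hxle, hr']
    have hMα : M ^ α = (1 + β) / 2 * y := Real.rpow_inv_rpow (by positivity) hα0.ne'
    have hM1 : M < 1 := Real.rpow_lt_one (by positivity) (by nlinarith) hαinv
    have hxr1 : x + r < 1 := lt_of_le_of_lt hM hM1
    -- the rectangle is inside C
    have hrect : Set.Ioo (x - r) (x + r) ×ˢ Set.Ioo (y - s) (y + s) ⊆ C := by
      rintro ⟨u, w⟩ ⟨hu, hw⟩
      simp only [Set.mem_Ioo] at hu hw
      have habs : |u| < x + r := abs_lt.mpr ⟨by linarith [hu.1], hu.2⟩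
      have h1 : |u| ^ α < (1 + β) / 2 * y := by
        calc |u| ^ α < M ^ α := Real.rpow_lt_rpow (abs_nonneg u) (habs.trans_le hM) hα0
          _ = (1 + β) / 2 * y := hMα
      have hsle : s ≤ (1 - β) / 2 * y :=
        mul_le_mul_of_nonneg_right (min_le_left _ _) hy0.le
      have hsle2 : s ≤ (1 - τ) / 2 := by
        calc s ≤ (1 - τ) / (2 * τ) * y := mul_le_mul_of_nonneg_right (min_le_right _ _) hy0.le
          _ ≤ (1 - τ) / (2 * τ) * τ := by
              have h0 : 0 ≤ (1 - τ) / (2 * τ) := (div_pos (by linarith) (by linarith)).le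
              exact mul_le_mul_of_nonneg_left hpτ.le h0
          _ = (1 - τ) / 2 := by field_simp
      rw [hC]
      refine ⟨?_, ?_, ?_, ?_⟩
      · show -1 < u
        linarith [hu.1]
      · show u < 1
        linarith [hu.2]
      · show |u| ^ α < w
        calc |u| ^ α < (1 + β) / 2 * y := h1
          _ = y - (1 - β) / 2 * y := by ring
          _ ≤ y - s := by linarith
          _ < w := by linarith [hw.1]
      · show w < 1
        linarith [hw.2]
    -- the half rectangle sits in the Hilbert unit ball
    have hhalf : Set.Ioo (-(r / 2)) (r / 2) ×ˢ Set.Ioo (-(s / 2)) (s / 2)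
        ⊆ hilbertUnitBall C (x, y) := by
      rintro ⟨u, w⟩ ⟨hu, hw⟩
      simp only [Set.mem_Ioo] at hu hw
      apply mem_hilbertUnitBall_of_pm
      · have e : (x, y) + (2:ℝ) • (u, w) = (x + 2 * u, y + 2 * w) := by
          simp [Prod.ext_iff, smul_eq_mul]
        rw [e]
        refine hrect ⟨⟨?_, ?_⟩, ⟨?_, ?_⟩⟩ <;> dsimp only <;>
          [linarith [hu.1]; linarith [hu.2]; linarith [hw.1]; linarith [hw.2]]
      · have e : (x, y) - (2:ℝ) • (u, w) = (x - 2 * u, y - 2 * w) := by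
          simp [Prod.ext_iff, smul_eq_mul]
        rw [e]
        refine hrect ⟨⟨?_, ?_⟩, ⟨?_, ?_⟩⟩ <;> dsimp only <;>
          [linarith [hu.2]; linarith [hu.1]; linarith [hw.2]; linarith [hw.1]]
    -- volume lower bound
    have hvol : ENNReal.ofReal r * ENNReal.ofReal s ≤ volume (hilbertUnitBall C (x, y)) := by
      have hm := measure_mono hhalf (μ := volume)
      have hv : volume (Set.Ioo (-(r / 2)) (r / 2) ×ˢ Set.Ioo (-(s / 2)) (s / 2))
          = ENNReal.ofReal r * ENNReal.ofReal s := by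
        rw [Measure.volume_eq_prod, Measure.prod_prod, Real.volume_Ioo, Real.volume_Ioo,
          sub_neg_eq_add, sub_neg_eq_add, add_halves, add_halves]
      rw [hv] at hm
      exact hm
    -- the real comparison
    have hys : y ^ a * y ^ a = y ^ α⁻¹ * y := by
      rw [← Real.rpow_add hy0]
      have haa : a + a = α⁻¹ + 1 := by rw [hadef]; ring
      rw [haa, Real.rpow_add hy0, Real.rpow_one]
    have hrs_eq : r * s = c₁ * c₄ * (y ^ a * y ^ a) := by
      rw [hys, hrdef, hsdef]; ring
    have hxa : x ^ a ≤ y ^ a := Real.rpow_le_rpow hpx.le hxy.le ha0.le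
    have hxap : 0 < x ^ a := Real.rpow_pos_of_pos hpx _
    have hyap : 0 < y ^ a := Real.rpow_pos_of_pos hy0 _
    have hreal : Real.pi / (r * s) ≤ K * (x ^ (-a) * y ^ (-a)) := by
      rw [hrs_eq, Real.rpow_neg hpx.le, Real.rpow_neg hy0.le]
      have h1 : Real.pi / (c₁ * c₄ * (y ^ a * y ^ a))
          ≤ Real.pi / (c₁ * c₄ * (x ^ a * y ^ a)) := by
        gcongr
      have h2 : Real.pi / (c₁ * c₄ * (x ^ a * y ^ a)) = K * ((x ^ a)⁻¹ * (y ^ a)⁻¹) := by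
        rw [hKdef]
        field_simp
      linarith [h2 ▸ h1]
    -- assemble the ENNReal bound
    calc ENNReal.ofReal Real.pi / volume (hilbertUnitBall C (x, y))
        ≤ ENNReal.ofReal Real.pi / (ENNReal.ofReal r * ENNReal.ofReal s) :=
          ENNReal.div_le_div_left hvol _
      _ = ENNReal.ofReal Real.pi / ENNReal.ofReal (r * s) := by
          rw [ENNReal.ofReal_mul hr0.le]
      _ = ENNReal.ofReal (Real.pi / (r * s)) := (ENNReal.ofReal_div_of_pos (by positivity)).symm
      _ ≤ ENNReal.ofReal (K * (x ^ (-a) * y ^ (-a))) := ENNReal.ofReal_le_ofReal hreal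
      _ = g (x, y) := by
          rw [hg]
          rw [ENNReal.ofReal_mul hK0.le,
            ENNReal.ofReal_mul (Real.rpow_nonneg hpx.le _)]
  -- measurability of g
  have hf1 : Measurable fun t : ℝ => ENNReal.ofReal (t ^ (-a)) :=
    (measurable_id.pow_const _).ennreal_ofReal
  have hgmeas : Measurable g := by
    rw [hg]
    exact measurable_const.mul ((hf1.comp measurable_fst).mul (hf1.comp measurable_snd))
  -- T is inside the product box
  set Q : Set (ℝ × ℝ) := Set.Ioo (0:ℝ) 1 ×ˢ Set.Ioo (0:ℝ) τ with hQ
  have hTQ : T ⊆ Q := by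
    rintro ⟨x, y⟩ hp
    rw [hT] at hp
    replace hp : 0 < x ∧ lam * x < y ∧ y < τ := hp
    obtain ⟨hpx, hpl, hpτ⟩ := hp
    have hy0 : 0 < y := lt_trans (by positivity) hpl
    have hxy : x < y := lt_of_le_of_lt (le_mul_of_one_le_left hpx.le hlam) hpl
    exact ⟨⟨hpx, by linarith⟩, ⟨hy0, hpτ⟩⟩
  -- finiteness of the one-dimensional integrals
  have hint : ∀ c : ℝ, 0 < c → c ≤ 1 →
      (∫⁻ t in Set.Ioo (0:ℝ) c, ENNReal.ofReal (t ^ (-a))) < ⊤ := by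
    intro c hc hc1
    have hii : IntervalIntegrable (fun t : ℝ => t ^ (-a)) volume 0 c :=
      intervalIntegral.intervalIntegrable_rpow' (by linarith)
    have hio : IntegrableOn (fun t : ℝ => t ^ (-a)) (Set.Ioc 0 c) volume :=
      (intervalIntegrable_iff_integrableOn_Ioc_of_le hc.le).mp hii
    have hpos : 0 ≤ᵐ[volume.restrict (Set.Ioc (0:ℝ) c)] fun t : ℝ => t ^ (-a) := by
      refine (ae_restrict_iff' measurableSet_Ioc).mpr (ae_of_all _ fun t ht => ?_)
      exact Real.rpow_nonneg ht.1.le _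
    have hfin : (∫⁻ t in Set.Ioc (0:ℝ) c, ENNReal.ofReal (t ^ (-a))) < ⊤ :=
      (hasFiniteIntegral_iff_ofReal hpos).mp hio.hasFiniteIntegral
    exact lt_of_le_of_lt (lintegral_mono_set Set.Ioo_subset_Ioc_self) hfin
  have hA1 := hint 1 one_pos le_rfl
  have hA2 := hint τ hτ0 hτ1.le
  -- assemble
  have hQint : (∫⁻ p in Q, g p) < ⊤ := by
    have hprod : (volume : Measure (ℝ × ℝ)).restrict Q
        = ((volume : Measure ℝ).restrict (Set.Ioo (0:ℝ) 1)).prod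
            ((volume : Measure ℝ).restrict (Set.Ioo (0:ℝ) τ)) := by
      rw [hQ, Measure.volume_eq_prod, Measure.prod_restrict]
    rw [hg]
    calc (∫⁻ p in Q, ENNReal.ofReal K *
            (ENNReal.ofReal (p.1 ^ (-a)) * ENNReal.ofReal (p.2 ^ (-a))))
        = ENNReal.ofReal K * ∫⁻ p in Q,
            (ENNReal.ofReal (p.1 ^ (-a)) * ENNReal.ofReal (p.2 ^ (-a))) :=
          lintegral_const_mul' _ _ ENNReal.ofReal_ne_top
      _ = ENNReal.ofReal K *
            ((∫⁻ t in Set.Ioo (0:ℝ) 1, ENNReal.ofReal (t ^ (-a))) *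
              ∫⁻ t in Set.Ioo (0:ℝ) τ, ENNReal.ofReal (t ^ (-a))) := by
          rw [hprod, lintegral_prod_mul hf1.aemeasurable hf1.aemeasurable]
      _ < ⊤ := ENNReal.mul_lt_top ENNReal.ofReal_lt_top (ENNReal.mul_lt_top hA1 hA2)
  unfold hilbertMeasure
  calc (∫⁻ p in T, ENNReal.ofReal Real.pi / volume (hilbertUnitBall C p))
      ≤ ∫⁻ p in T, g p := setLIntegral_mono hgmeas key
    _ ≤ ∫⁻ p in Q, g p := lintegral_mono_set hTQ
    _ < ⊤ := hQint
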